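/- For every n ≥ 1, the function h_n(ν) has exactly n−1 real zeros, all of which are negative and simple; moreover the zeros of h_n and h_{n+1} strictly interlace. -/

import Mathlib

open Finset

/-- The functions `h_n(ν)` defined by `h_0 = h_1 = 1` and
`h_{n+1}(ν) = (2(ν+n)/ν) h_n(ν) - h_{n-1}(ν)` for `n ≥ 1`. -/
noncomputable def hfun : ℕ → ℝ → ℝ
  | 0, _ => 1
  | 1, _ => 1
  | n + 2, ν => (2 * (ν + (n + 1)) / ν) * hfun (n + 1) ν - hfun n ν

/-- The set of (real, nonzero) zeros of `h_n`. -/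
def hZeros (n : ℕ) : Set ℝ := {ν : ℝ | ν ≠ 0 ∧ hfun n ν = 0}

open Polynomial


noncomputable def Qp : ℕ → Polynomial ℝ
  | 0 => 1
  | 1 => X + C 2
  | (k+2) => (2 * X + C (2*(k:ℝ)+4)) * Qp (k+1) - X^2 * Qp k

lemma two_step (P : ℕ → Prop) (h0 : P 0) (h1 : P 1)
    (ih : ∀ k, P k → P (k+1) → P (k+2)) : ∀ n, P n := by
  have key : ∀ n, P n ∧ P (n+1) := by
    intro n
    induction n with
    | zero => exact ⟨h0, h1⟩
    | succ k hk => exact ⟨hk.2, ih k hk.1 hk.2⟩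
  exact fun n => (key n).1

lemma Qp_monic_deg : ∀ k, (Qp k).Monic ∧ (Qp k).natDegree = k := by
  apply two_step
  · exact ⟨by rw [show Qp 0 = 1 from rfl]; exact monic_one,
      by rw [show Qp 0 = 1 from rfl]; exact natDegree_one⟩
  · refine ⟨?_, ?_⟩
    · rw [show Qp 1 = X + C 2 from rfl]; exact monic_X_add_C 2
    · rw [show Qp 1 = X + C 2 from rfl]; exact natDegree_X_add_C 2
  · intro k ⟨hk, hdk⟩ ⟨hk1, hdk1⟩
    have hA : (2 * X + C (2*(k:ℝ)+4)).natDegree = 1 := by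
      compute_degree!
    have hAl : (2 * X + C (2*(k:ℝ)+4)).coeff 1 = 2 := by
      simp [coeff_add, coeff_C]
    -- coeff (k+2) of the product
    have hprod_deg : ((2 * X + C (2*(k:ℝ)+4)) * Qp (k+1)).natDegree ≤ k + 2 := by
      refine le_trans (natDegree_mul_le) ?_
      rw [hA, hdk1]; omega
    have hc1 : ((2 * X + C (2*(k:ℝ)+4)) * Qp (k+1)).coeff (k+2) = 2 := by
      have := coeff_mul_degree_add_degree (2 * X + C (2*(k:ℝ)+4)) (Qp (k+1))
      rw [hA, hdk1] at this
      rw [show k + 2 = 1 + (k+1) by ring, this]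
      rw [hk1.leadingCoeff]
      have : (2 * X + C (2*(k:ℝ)+4)).leadingCoeff = (2 * X + C (2*(k:ℝ)+4)).coeff 1 := by
        rw [leadingCoeff, hA]
      rw [this, hAl, mul_one]
    have hdX2 : ((X:Polynomial ℝ)^2 * Qp k).natDegree ≤ k + 2 := by
      refine le_trans (natDegree_mul_le) ?_
      rw [natDegree_X_pow, hdk]; omega
    have hc2 : ((X:Polynomial ℝ)^2 * Qp k).coeff (k+2) = 1 := by
      have := coeff_mul_degree_add_degree ((X:Polynomial ℝ)^2) (Qp k)
      rw [natDegree_X_pow, hdk] at this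
      rw [show k + 2 = 2 + k by ring, this, hk.leadingCoeff, leadingCoeff_X_pow, one_mul]
    have hcoeff : (Qp (k+2)).coeff (k+2) = 1 := by
      rw [show Qp (k+2) = (2 * X + C (2*(k:ℝ)+4)) * Qp (k+1) - X^2 * Qp k from rfl]
      rw [coeff_sub, hc1, hc2]; norm_num
    have hdle : (Qp (k+2)).natDegree ≤ k + 2 := by
      rw [show Qp (k+2) = (2 * X + C (2*(k:ℝ)+4)) * Qp (k+1) - X^2 * Qp k from rfl]
      exact le_trans (natDegree_sub_le _ _) (max_le hprod_deg hdX2)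
    have hmon : (Qp (k+2)).Monic := monic_of_natDegree_le_of_coeff_eq_one _ hdle hcoeff
    refine ⟨hmon, le_antisymm hdle (le_natDegree_of_ne_zero (by rw [hcoeff]; norm_num))⟩


lemma hfun_step (n : ℕ) (ν : ℝ) :
    hfun (n+2) ν = (2 * (ν + ((n:ℝ) + 1)) / ν) * hfun (n + 1) ν - hfun n ν := by
  simp [hfun]




lemma hfun_eq : ∀ k, ∀ ν : ℝ, ν ≠ 0 → ν^k * hfun (k+1) ν = (Qp k).eval ν := by
  apply two_step
  · intro ν hν
    show ν^0 * hfun 1 ν = (Qp 0).eval ν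
    rw [show Qp 0 = 1 from rfl, show hfun 1 ν = 1 from rfl]
    simp
  · intro ν hν
    rw [show Qp 1 = X + C 2 from rfl, show hfun (1+1) ν = hfun (0+2) ν from rfl, hfun_step,
      show hfun 1 ν = 1 from rfl, show hfun 0 ν = 1 from rfl]
    simp only [eval_add, eval_X, eval_C]
    push_cast
    field_simp
    ring
  · intro k ih1 ih2 ν hν
    have e1 := ih1 ν hν
    have e2 := ih2 ν hν
    rw [show Qp (k+2) = (2 * X + C (2*(k:ℝ)+4)) * Qp (k+1) - X^2 * Qp k from rfl]
    rw [show k+3 = (k+1)+2 from rfl, hfun_step]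
    simp only [eval_sub, eval_mul, eval_add, eval_X, eval_C, eval_pow, eval_ofNat, ← e1, ← e2]
    push_cast
    field_simp
    ring

lemma Qp_eval_zero_pos : ∀ k, 0 < (Qp k).eval 0 := by
  apply two_step
  · rw [show Qp 0 = 1 from rfl]; simp
  · rw [show Qp 1 = X + C 2 from rfl]; simp
  · intro k h1 h2
    rw [show Qp (k+2) = (2 * X + C (2*(k:ℝ)+4)) * Qp (k+1) - X^2 * Qp k from rfl]
    simp only [eval_sub, eval_mul, eval_add, eval_X, eval_C, eval_pow]
    norm_num
    positivity

lemma ivt_sign {f : ℝ → ℝ} (hf : Continuous f) {a b : ℝ} (hab : a < b)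
    (h : f a * f b < 0) : ∃ x ∈ Set.Ioo a b, f x = 0 := by
  rcases lt_or_ge (f a) 0 with ha | ha
  · have hb : 0 < f b := by nlinarith
    have := intermediate_value_Ioo hab.le hf.continuousOn (a := a) (b := b)
    exact (Set.mem_image _ _ _).1 (this ⟨ha, hb⟩) |>.imp fun x ⟨hx, he⟩ => ⟨hx, he⟩
  · have ha' : 0 < f a := by
      rcases ha.lt_or_eq with h' | h'
      · exact h'
      · exfalso; rw [← h'] at h; simp at h
    have hb : f b < 0 := by nlinarith
    have := intermediate_value_Ioo' hab.le hf.continuousOn (a := a) (b := b)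
    exact (Set.mem_image _ _ _).1 (this ⟨hb, ha'⟩) |>.imp fun x ⟨hx, he⟩ => ⟨hx, he⟩

lemma sign_prod : ∀ (k : ℕ) (r : Fin k → ℝ) (x : ℝ) (m : ℕ),
    (∀ j : Fin k, (j:ℕ) < m → r j < x) → (∀ j : Fin k, m ≤ (j:ℕ) → x < r j) →
    0 < (-1:ℝ)^(k-m) * ∏ j, (x - r j) := by
  intro k
  induction k with
  | zero => intro r x m _ _; simp
  | succ k ih =>
    intro r x m hlt hgt
    rw [Fin.prod_univ_castSucc]
    rcases le_or_gt m k with hm | hm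
    · have hlast : x < r (Fin.last k) := hgt (Fin.last k) (by simp; omega)
      have : (-1:ℝ)^(k+1-m) = (-1)^(k-m) * (-1) := by
        rw [show k+1-m = (k-m)+1 by omega, pow_succ]
      rw [this]
      have ihh := ih (fun j => r j.castSucc) x m
        (fun j hj => hlt j.castSucc (by simpa using hj))
        (fun j hj => hgt j.castSucc (by simpa using hj))
      nlinarith [ihh]
    · have hall : ∀ j : Fin (k+1), r j < x := fun j => hlt j (by omega)
      rw [show k+1-m = 0 by omega, pow_zero, one_mul]
      have : 0 < ∏ j : Fin k, (x - r j.castSucc) :=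
        Finset.prod_pos fun j _ => sub_pos.2 (hall j.castSucc)
      nlinarith [sub_pos.2 (hall (Fin.last k))]

lemma prod_form {p : Polynomial ℝ} {m : ℕ} (hm : p.Monic) (hd : p.natDegree = m)
    (t : Fin m → ℝ) (ht : Function.Injective t) (hr : ∀ i, p.eval (t i) = 0) :
    p = ∏ i, (X - C (t i)) := by
  classical
  set M : Multiset ℝ := Multiset.map t Finset.univ.val with hM
  have hnd : M.Nodup := Multiset.Nodup.map ht Finset.univ.nodup
  have hne : p ≠ 0 := hm.ne_zero
  have hle : M ≤ p.roots := by
    rw [Multiset.le_iff_subset hnd]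
    intro a ha
    rw [hM, Multiset.mem_map] at ha
    obtain ⟨i, _, rfl⟩ := ha
    rw [Polynomial.mem_roots hne]
    exact hr i
  have hcardM : Multiset.card M = m := by
    rw [hM, Multiset.card_map]
    simp
  have hcard : p.roots.card = p.natDegree := by
    have h1 := Polynomial.card_roots' p
    have h2 : m ≤ p.roots.card := hcardM ▸ Multiset.card_le_card hle
    omega
  have hroots : M = p.roots := Multiset.eq_of_le_of_card_le hle (by rw [hcardM, hcard, hd])
  have hsplits : Polynomial.Splits p :=
    (Polynomial.splits_iff_card_roots).2 hcard
  have := hsplits.eq_prod_roots_of_monic hm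
  rw [this, ← hroots, hM, Multiset.map_map]
  rfl

lemma neg_one_pow_sub (a b : ℕ) (h : b ≤ a) : (-1:ℝ)^(a-b) = (-1)^(a+b) := by
  rw [show a+b = (a-b) + 2*b by omega, pow_add, pow_mul]
  simp

def Interl {k : ℕ} (r : Fin k → ℝ) (s : Fin (k+1) → ℝ) : Prop :=
  ∀ i : Fin k, s i.castSucc < r i ∧ r i < s i.succ

lemma eval_prod_form {m : ℕ} (r : Fin m → ℝ) (x : ℝ) :
    (∏ i, (X - C (r i))).eval x = ∏ i, (x - r i) := by
  simp [eval_prod]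

lemma main_ind : ∀ k, ∃ (r : Fin k → ℝ) (s : Fin (k+1) → ℝ),
    StrictMono r ∧ StrictMono s ∧ (∀ i, r i < 0) ∧ (∀ i, s i < 0) ∧
    Qp k = ∏ i, (X - C (r i)) ∧ Qp (k+1) = ∏ i, (X - C (s i)) ∧ Interl r s := by
  intro k
  induction k with
  | zero =>
    refine ⟨Fin.elim0, fun _ => -2, ?_, ?_, ?_, ?_, ?_, ?_, ?_⟩
    · intro i; exact i.elim0
    · intro a b hab; exfalso; omega
    · intro i; exact i.elim0
    · intro i; norm_num
    · simp [show Qp 0 = 1 from rfl]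
    · rw [show Qp 1 = X + C 2 from rfl, Fin.prod_univ_one]
      rw [map_neg, sub_neg_eq_add]
    · intro i; exact i.elim0
  | succ k ih =>
    obtain ⟨r, s, hrm, hsm, hrneg, hsneg, hQk, hQk1, hint⟩ := ih
    have hmon := (Qp_monic_deg (k+2)).1
    have hdeg := (Qp_monic_deg (k+2)).2
    -- recurrence for eval
    have hrec : ∀ x : ℝ, (Qp (k+2)).eval x
        = (2*x + (2*(k:ℝ)+4)) * (Qp (k+1)).eval x - x^2 * (Qp k).eval x := by
      intro x
      rw [show Qp (k+2) = (2 * X + C (2*(k:ℝ)+4)) * Qp (k+1) - X^2 * Qp k from rfl]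
      simp
    -- sign of Qp k at s i
    have hsign : ∀ i : Fin (k+1), 0 < (-1:ℝ)^(k + (i:ℕ)) * (Qp k).eval (s i) := by
      intro i
      have h1 : 0 < (-1:ℝ)^(k - (i:ℕ)) * ∏ j, (s i - r j) := by
        refine sign_prod k r (s i) (i:ℕ) ?_ ?_
        · intro j hj
          have h2 : r j < s j.succ := (hint j).2
          have h3 : s j.succ ≤ s i := hsm.monotone (by rw [Fin.le_def]; simp; omega)
          linarith
        · intro j hj
          have h2 : s j.castSucc < r j := (hint j).1
          have h3 : s i ≤ s j.castSucc := hsm.monotone (by rw [Fin.le_def]; simp; omega)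
          linarith
      rw [neg_one_pow_sub k i (by omega)] at h1
      rw [hQk, eval_prod_form]
      exact h1
    -- value of Qp (k+2) at s i
    have hQ2s : ∀ i : Fin (k+1), (Qp (k+2)).eval (s i) = -(s i)^2 * (Qp k).eval (s i) := by
      intro i
      rw [hrec]
      have hz : (Qp (k+1)).eval (s i) = 0 := by
        rw [hQk1, eval_prod_form]
        exact Finset.prod_eq_zero (Finset.mem_univ i) (by ring)
      rw [hz]; ring
    -- far left point
    obtain ⟨y, hy1, hy2⟩ : ∃ y, y < s 0 ∧ 0 < (-1:ℝ)^k * (Qp (k+2)).eval y := by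
      set q : Polynomial ℝ := C ((-1:ℝ)^k) * ((Qp (k+2)).comp (-X)) with hq
      have hnd : ((-X : Polynomial ℝ)).natDegree = 1 := by simp
      have hlcX : ((-X : Polynomial ℝ)).leadingCoeff = -1 := by simp
      have hlcc : ((Qp (k+2)).comp (-X)).leadingCoeff = (-1:ℝ)^(k+2) := by
        rw [leadingCoeff_comp (by rw [hnd]; norm_num), hmon.leadingCoeff, hlcX, hdeg, one_mul]
      have hndc : ((Qp (k+2)).comp (-X)).natDegree = k+2 := by
        rw [natDegree_comp, hnd, hdeg, mul_one]
      have hlcq : q.leadingCoeff = 1 := by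
        rw [hq, leadingCoeff_mul, leadingCoeff_C, hlcc, ← pow_add,
          show k + (k+2) = 2*(k+1) by ring, pow_mul]
        norm_num
      have hqne : q ≠ 0 := fun h => by simp [h] at hlcq
      have hdq : 0 < q.degree := by
        have : q.natDegree = k + 2 := by
          rw [hq, natDegree_C_mul (by positivity), hndc]
        rw [degree_eq_natDegree hqne, this]
        exact_mod_cast Nat.succ_pos _
      have htend := Polynomial.tendsto_atTop_of_leadingCoeff_nonneg q hdq (by rw [hlcq]; norm_num)
      have hev : ∀ᶠ z in Filter.atTop, 0 < q.eval z := htend.eventually_gt_atTop 0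
      obtain ⟨z, hz1, hz2⟩ := (hev.and (Filter.eventually_gt_atTop (-(s 0)))).exists
      refine ⟨-z, by linarith, ?_⟩
      have : q.eval z = (-1:ℝ)^k * (Qp (k+2)).eval (-z) := by
        rw [hq]; simp [eval_comp]
      rw [← this]; exact hz1
    -- endpoints
    set e : Fin (k+3) → ℝ := fun i =>
      if _ : (i:ℕ) = 0 then y else if h2 : (i:ℕ) < k+2 then s ⟨(i:ℕ)-1, by omega⟩ else 0 with he
    have he0 : ∀ (h : (0:ℕ) < k+3), e ⟨0, h⟩ = y := by intro h; simp [he]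
    have hes : ∀ (m : ℕ) (hm : m < k+1), e ⟨m+1, by omega⟩ = s ⟨m, hm⟩ := by
      intro m hm
      simp only [he]
      rw [dif_neg (by simp), dif_pos (by simp; omega)]
      exact congrArg s (Fin.ext (by simp))
    have helast : e ⟨k+2, by omega⟩ = 0 := by
      simp only [he]
      rw [dif_neg (by simp), dif_neg (by simp)]
    have heneg : ∀ (m : ℕ) (h : m+1 < k+3), e ⟨m+1, h⟩ ≤ 0 := by
      intro m h
      rcases lt_or_ge m (k+1) with hm | hm
      · rw [hes m hm]; exact (hsneg _).le
      · have : m = k+1 := by omega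
        subst this
        rw [helast]
    -- signs at endpoints
    have hesign : ∀ i : Fin (k+3), 0 < (-1:ℝ)^(k + (i:ℕ)) * (Qp (k+2)).eval (e i) := by
      intro i
      obtain ⟨iv, hiv⟩ := i
      rcases Nat.eq_zero_or_pos iv with h0 | h0
      · subst h0
        rw [he0]
        simpa using hy2
      · obtain ⟨m, rfl⟩ : ∃ m, iv = m + 1 := ⟨iv - 1, by omega⟩
        rcases lt_or_ge m (k+1) with hm | hm
        · rw [hes m hm]
          have key := hsign ⟨m, hm⟩
          have hQ := hQ2s ⟨m, hm⟩
          have hs2 : 0 < (s ⟨m, hm⟩)^2 := by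
            nlinarith [hsneg ⟨m, hm⟩]
          rw [hQ, show k + (m+1) = (k+m)+1 by ring, pow_succ]
          simp only [Fin.val_mk] at key
          nlinarith [mul_pos key hs2]
        · have hm2 : m = k + 1 := by omega
          subst hm2
          rw [helast]
          have h0pos := Qp_eval_zero_pos (k+2)
          rw [show k + (k+1+1) = 2*(k+1) by ring, pow_mul]
          norm_num
          exact h0pos
    have hval : ∀ (a : ℕ) (ha : a < k+3) (b : ℕ) (hb : b < k+3), a = b →
        e ⟨a, ha⟩ = e ⟨b, hb⟩ := by
      intro a ha b hb h; subst h; rfl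
    -- consecutive endpoints increase
    have hestep : ∀ (m : ℕ) (h : m+1 < k+3), e ⟨m, by omega⟩ < e ⟨m+1, h⟩ := by
      intro m h
      rcases Nat.eq_zero_or_pos m with h0 | h0
      · subst h0
        rw [he0, hes 0 (by omega)]
        have : s ⟨0, by omega⟩ = s 0 := congrArg s (Fin.ext (by simp [Fin.val_zero]))
        rw [this]; exact hy1
      · obtain ⟨m', rfl⟩ : ∃ m', m = m' + 1 := ⟨m - 1, by omega⟩
        rcases lt_or_ge (m'+1) (k+1) with hm | hm
        · rw [hes m' (by omega), hes (m'+1) hm]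
          exact hsm (by rw [Fin.lt_def]; simp)
        · have h1 : m' + 1 = k + 1 := by omega
          calc e ⟨m'+1, by omega⟩ = e ⟨k+1, by omega⟩ := hval _ _ _ _ h1
            _ = s ⟨k, by omega⟩ := hes k (by omega)
            _ < 0 := hsneg _
            _ = e ⟨m'+1+1, h⟩ := by
                rw [← helast]; exact hval _ _ _ _ (by omega)
    -- roots of Qp (k+2) via IVT
    have hgap : ∀ i : Fin (k+2), ∃ x, x ∈ Set.Ioo (e ⟨(i:ℕ), by omega⟩) (e ⟨(i:ℕ)+1, by omega⟩)
        ∧ (Qp (k+2)).eval x = 0 := by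
      intro i
      have hab : e ⟨(i:ℕ), by omega⟩ < e ⟨(i:ℕ)+1, by omega⟩ := hestep i (by omega)
      have hA := hesign ⟨(i:ℕ), by omega⟩
      have hB := hesign ⟨(i:ℕ)+1, by omega⟩
      simp only [Fin.val_mk] at hA hB
      rw [show k + ((i:ℕ)+1) = (k+(i:ℕ))+1 by ring, pow_succ] at hB
      have hprod : (Qp (k+2)).eval (e ⟨(i:ℕ), by omega⟩)
          * (Qp (k+2)).eval (e ⟨(i:ℕ)+1, by omega⟩) < 0 := by
        nlinarith [mul_pos hA hB, sq_nonneg ((-1:ℝ)^(k+(i:ℕ)))]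
      obtain ⟨x, hx1, hx2⟩ := ivt_sign (Qp (k+2)).continuous hab hprod
      exact ⟨x, hx1, hx2⟩
    choose t htmem hteval using hgap
    have htneg : ∀ i, t i < 0 := by
      intro i
      have h1 := (htmem i).2
      have h2 := heneg (i:ℕ) (by omega)
      linarith
    have htmono : StrictMono t := by
      rw [Fin.strictMono_iff_lt_succ]
      intro i
      have h1 := (htmem i.castSucc).2
      have h2 := (htmem i.succ).1
      have h1' : t i.castSucc < e ⟨(i:ℕ)+1, by omega⟩ :=
        lt_of_lt_of_le h1 (le_of_eq (hval _ _ _ _ (by simp)))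
      have h2' : e ⟨(i:ℕ)+1, by omega⟩ < t i.succ :=
        lt_of_le_of_lt (le_of_eq (hval _ _ _ _ (by simp))) h2
      linarith
    have hQk2 : Qp (k+2) = ∏ i, (X - C (t i)) :=
      prod_form hmon hdeg t htmono.injective hteval
    refine ⟨s, t, hsm, htmono, hsneg, htneg, hQk1, hQk2, ?_⟩
    intro i
    have h1 := (htmem i.castSucc).2
    have h2 := (htmem i.succ).1
    have heq : ∀ (h : (i:ℕ)+1 < k+3), e ⟨(i:ℕ)+1, h⟩ = s i := by
      intro h
      rw [hes (i:ℕ) (by omega)]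
    have h1' : t i.castSucc < s i := by
      refine lt_of_lt_of_le h1 (le_of_eq ?_)
      rw [← heq (by omega)]
      exact hval _ _ _ _ (by simp)
    have h2' : s i < t i.succ := by
      refine lt_of_le_of_lt (le_of_eq ?_) h2
      rw [← heq (by omega)]
      exact (hval _ _ _ _ (by simp)).symm
    exact ⟨h1', h2'⟩

lemma hZeros_eq {m : ℕ} {r : Fin m → ℝ} (h : Qp m = ∏ i, (X - C (r i)))
    (hneg : ∀ i, r i < 0) : hZeros (m+1) = Set.range r := by
  ext ν
  simp only [hZeros, Set.mem_setOf_eq, Set.mem_range]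
  constructor
  · rintro ⟨hν, hz⟩
    have heq := hfun_eq m ν hν
    rw [hz, mul_zero] at heq
    have heval : (Qp m).eval ν = 0 := heq.symm
    rw [h, eval_prod_form] at heval
    obtain ⟨i, _, hi⟩ := Finset.prod_eq_zero_iff.1 heval
    exact ⟨i, by linarith [sub_eq_zero.1 hi]⟩
  · rintro ⟨i, rfl⟩
    have hν : r i ≠ 0 := (hneg i).ne
    refine ⟨hν, ?_⟩
    have heq := hfun_eq m (r i) hν
    have heval : (Qp m).eval (r i) = 0 := by
      rw [h, eval_prod_form]
      exact Finset.prod_eq_zero (Finset.mem_univ i) (by ring)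
    rw [heval] at heq
    have hpm : (r i)^m ≠ 0 := pow_ne_zero m hν
    exact (mul_eq_zero.1 heq).resolve_left hpm

lemma ncard_range {m : ℕ} (r : Fin m → ℝ) (hinj : Function.Injective r) :
    (Set.range r).ncard = m := by
  have : Set.range r = ↑(Finset.image r Finset.univ) := by simp
  rw [this, Set.ncard_coe_finset, Finset.card_image_of_injective _ hinj,
    Finset.card_univ, Fintype.card_fin]

lemma deriv_ne {m : ℕ} {r : Fin m → ℝ} (h : Qp m = ∏ i, (X - C (r i)))
    (hinj : Function.Injective r) (hneg : ∀ i, r i < 0) (i : Fin m) :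
    deriv (hfun (m+1)) (r i) ≠ 0 := by
  classical
  set ν := r i with hνdef
  have hν : ν ≠ 0 := (hneg i).ne
  -- local representation
  have hev : hfun (m+1) =ᶠ[nhds ν] fun x => (Qp m).eval x / x^m := by
    have hmem : {x : ℝ | x ≠ 0} ∈ nhds ν := by
      have : IsOpen {x : ℝ | x ≠ 0} := isOpen_compl_singleton
      exact this.mem_nhds hν
    filter_upwards [hmem] with x hx
    have := hfun_eq m x hx
    field_simp
    linarith [this]
  -- eval of Qp m at ν is 0
  have hP0 : (Qp m).eval ν = 0 := by
    rw [h, eval_prod_form]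
    exact Finset.prod_eq_zero (Finset.mem_univ i) (by ring)
  -- derivative of Qp m at ν is nonzero
  have hD : (Polynomial.derivative (Qp m)).eval ν ≠ 0 := by
    have hfact : Qp m = (X - C (r i)) * ∏ j ∈ Finset.univ.erase i, (X - C (r j)) := by
      rw [h]
      exact (Finset.mul_prod_erase _ _ (Finset.mem_univ i)).symm
    have hder : Polynomial.derivative (Qp m)
        = ∏ j ∈ Finset.univ.erase i, (X - C (r j))
          + (X - C (r i)) * Polynomial.derivative (∏ j ∈ Finset.univ.erase i, (X - C (r j))) := by
      rw [hfact, derivative_mul]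
      simp
    rw [hder]
    simp only [eval_add, eval_mul, eval_sub, eval_X, eval_C, sub_self, zero_mul, add_zero]
    rw [eval_prod]
    rw [show ν - r i = 0 from sub_self _, zero_mul, add_zero]
    rw [Finset.prod_ne_zero_iff]
    intro j hj
    simp only [eval_sub, eval_X, eval_C]
    have : r j ≠ r i := fun hEq => (Finset.mem_erase.1 hj).1 (hinj hEq)
    intro hc
    exact this (by linarith [sub_eq_zero.1 hc])
  -- compute the derivative of the quotient
  have hnum : HasDerivAt (fun x : ℝ => (Qp m).eval x) ((Polynomial.derivative (Qp m)).eval ν) ν :=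
    (Qp m).hasDerivAt ν
  have hden : HasDerivAt (fun x : ℝ => x^m) ((m:ℝ) * ν^(m-1)) ν := hasDerivAt_pow m ν
  have hδ : ν^m ≠ 0 := pow_ne_zero m hν
  have hquot := hnum.div hden hδ
  have hder2 : deriv (hfun (m+1)) ν = ((Polynomial.derivative (Qp m)).eval ν * ν^m
      - (Qp m).eval ν * ((m:ℝ) * ν^(m-1))) / (ν^m)^2 := by
    rw [hev.deriv_eq]
    exact hquot.deriv
  rw [hder2, hP0]
  simp only [zero_mul, sub_zero]
  exact div_ne_zero (mul_ne_zero hD hδ) (pow_ne_zero 2 hδ)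

lemma consecutive {N : ℕ} {u : Fin N → ℝ} (hu : StrictMono u) {a b : ℝ}
    (ha : a ∈ Set.range u) (hb : b ∈ Set.range u) (hab : a < b)
    (hnc : ¬∃ c ∈ Set.range u, a < c ∧ c < b) :
    ∃ p q : Fin N, a = u p ∧ b = u q ∧ (q:ℕ) = (p:ℕ)+1 := by
  obtain ⟨p, rfl⟩ := ha
  obtain ⟨q, rfl⟩ := hb
  have hpq : p < q := hu.lt_iff_lt.1 hab
  refine ⟨p, q, rfl, rfl, ?_⟩
  by_contra hc
  have h2 : (p:ℕ)+1 < (q:ℕ) := by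
    have := Fin.lt_def.1 hpq
    omega
  have hlt : ((p:ℕ)+1) < N := lt_trans h2 q.isLt
  refine hnc ⟨u ⟨(p:ℕ)+1, hlt⟩, ⟨_, rfl⟩, ?_, ?_⟩
  · exact hu (by rw [Fin.lt_def]; simp)
  · exact hu (by rw [Fin.lt_def]; simpa using h2)

/-- For every `n ≥ 1`, `h_n` has exactly `n-1` real zeros, all negative and simple,
and the zeros of `h_n` and `h_{n+1}` strictly interlace. -/
theorem hfun_zeros (n : ℕ) (hn : 1 ≤ n) :
    hZeros n ⊆ Set.Iio 0 ∧
    (hZeros n).ncard = n - 1 ∧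
    (∀ ν ∈ hZeros n, deriv (hfun n) ν ≠ 0) ∧
    (∀ a ∈ hZeros (n + 1), ∀ b ∈ hZeros (n + 1), a < b →
      (¬∃ c ∈ hZeros (n + 1), a < c ∧ c < b) →
      ∃! z, z ∈ hZeros n ∧ a < z ∧ z < b) ∧
    (∀ a ∈ hZeros n, ∀ b ∈ hZeros n, a < b →
      (¬∃ c ∈ hZeros n, a < c ∧ c < b) →
      ∃! z, z ∈ hZeros (n + 1) ∧ a < z ∧ z < b) := by
  obtain ⟨k, rfl⟩ : ∃ k, n = k+1 := ⟨n-1, by omega⟩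
  obtain ⟨r, s, hrm, hsm, hrneg, hsneg, hQk, hQk1, hint⟩ := main_ind k
  have hZn : hZeros (k+1) = Set.range r := hZeros_eq hQk hrneg
  have hZn1 : hZeros (k+1+1) = Set.range s := hZeros_eq hQk1 hsneg
  refine ⟨?_, ?_, ?_, ?_, ?_⟩
  · rw [hZn]
    rintro x ⟨i, rfl⟩
    exact hrneg i
  · rw [hZn, ncard_range r hrm.injective]
    omega
  · rw [hZn]
    rintro ν ⟨i, rfl⟩
    exact deriv_ne hQk hrm.injective hrneg i
  · rw [hZn, hZn1]
    intro a ha b hb hab hnc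
    obtain ⟨p, q, rfl, rfl, hpq⟩ := consecutive hsm ha hb hab hnc
    have hpk : (p:ℕ) < k := by
      have := q.isLt
      omega
    set i : Fin k := ⟨(p:ℕ), hpk⟩ with hidef
    have hip : i.castSucc = p := Fin.ext (by simp [hidef])
    have hiq : i.succ = q := Fin.ext (by simp [hidef]; omega)
    refine ⟨r i, ⟨⟨i, rfl⟩, ?_, ?_⟩, ?_⟩
    · rw [← hip]; exact (hint i).1
    · rw [← hiq]; exact (hint i).2
    · rintro z ⟨⟨j, rfl⟩, h1, h2⟩
      congr 1
      by_contra hji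
      rcases lt_or_gt_of_ne hji with hlt | hgt
      · -- j < i : r j < s j.succ ≤ s p
        have h3 : r j < s j.succ := (hint j).2
        have h4 : s j.succ ≤ s p := hsm.monotone (by
          rw [Fin.le_def]
          have := Fin.lt_def.1 hlt
          simp [hidef] at this ⊢
          omega)
        linarith
      · -- i < j : s q ≤ s j.castSucc < r j
        have h3 : s j.castSucc > s q ∨ s j.castSucc = s q := by
          rcases lt_or_eq_of_le (hsm.monotone (show q ≤ j.castSucc by
            rw [Fin.le_def]
            have := Fin.lt_def.1 hgt
            simp [hidef] at this ⊢
            omega)) with h | h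
          · exact Or.inl h
          · exact Or.inr h.symm
        have h4 : s q ≤ s j.castSucc := by rcases h3 with h | h <;> linarith
        have h5 : s j.castSucc < r j := (hint j).1
        linarith
  · rw [hZn, hZn1]
    intro a ha b hb hab hnc
    obtain ⟨p, q, rfl, rfl, hpq⟩ := consecutive hrm ha hb hab hnc
    have hq1 : ((p:ℕ)+1) < k+1 := by
      have := q.isLt
      omega
    set z : Fin (k+1) := ⟨(p:ℕ)+1, hq1⟩ with hzdef
    have hzp : z = p.succ := Fin.ext (by simp [hzdef])
    have hzq : z = q.castSucc := Fin.ext (by simp [hzdef]; omega)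
    refine ⟨s z, ⟨⟨z, rfl⟩, ?_, ?_⟩, ?_⟩
    · rw [hzp]; exact (hint p).2
    · rw [hzq]; exact (hint q).1
    · rintro w ⟨⟨j, rfl⟩, h1, h2⟩
      congr 1
      by_contra hj
      rcases lt_or_gt_of_ne hj with hlt | hgt
      · -- j < z, i.e. (j:ℕ) ≤ p : s j ≤ s p.castSucc < r p
        have h3 : s j ≤ s p.castSucc := hsm.monotone (by
          rw [Fin.le_def]
          have := Fin.lt_def.1 hlt
          simp [hzdef] at this ⊢
          omega)
        have h4 : s p.castSucc < r p := (hint p).1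
        linarith
      · -- j > z, i.e. (j:ℕ) ≥ p+2 = q+1 : s j ≥ s q.succ > r q
        have h3 : s q.succ ≤ s j := hsm.monotone (by
          rw [Fin.le_def]
          have := Fin.lt_def.1 hgt
          simp [hzdef] at this ⊢
          omega)
        have h4 : r q < s q.succ := (hint q).2
        linarith
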